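/- Let n ≥ 2, let U ⊆ ℂⁿ be an open set on which the coordinates λ₁,…,λₙ are pairwise distinct, and let A₁,…,Aₙ : U → M₂(ℂ) be differentiable. Let V = {(λ, λ₁,…,λₙ) ∈ ℂ × U : λ ≠ λ_j for all j}, and suppose Ψ : V → GL(2,ℂ) is twice continuously differentiable and satisfies, on all of V, the linear system ∂Ψ/∂λ = (Σ_{j=1}^n A_j(λ₁,…,λₙ)/(λ−λ_j))·Ψ and ∂Ψ/∂λ_j = −(A_j(λ₁,…,λₙ)/(λ−λ_j))·Ψ for every j = 1,…,n. Then the matrices A₁,…,Aₙ satisfy the Schlesinger equations on U: ∂A_j/∂λ_i = [A_i,A_j]/(λ_i−λ_j) for all i ≠ j, and ∂A_i/∂λ_i = −Σ_{j≠i}[A_i,A_j]/(λ_i−λ_j) for all i. -/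

import Mathlib

/-!
Statement 3: if the compatible linear system `∂Ψ/∂λ = (Σ_j A_j/(λ−λ_j))Ψ`,
`∂Ψ/∂λ_j = −A_j/(λ−λ_j)·Ψ` admits a twice continuously differentiable
invertible solution `Ψ`, then the `A_j` satisfy the Schlesinger equations.
-/

attribute [local instance] Matrix.normedAddCommGroup Matrix.normedSpace

/-- Partial derivative of `f` with respect to the `i`-th coordinate at `x`. -/
noncomputable def pderiv' {E : Type*} [NormedAddCommGroup E] [NormedSpace ℂ E]
    {n : ℕ} (i : Fin n) (f : (Fin n → ℂ) → E) (x : Fin n → ℂ) : E :=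
  deriv (fun s => f (Function.update x i s)) (x i)

open Topology Filter

noncomputable section SchlesingerAux

local notation "Mat" => Matrix (Fin 2) (Fin 2) ℂ

/-- multiplication as a continuous bilinear map on 2x2 matrices -/
def mulCLM : Mat →L[ℂ] Mat →L[ℂ] Mat :=
  LinearMap.toContinuousLinearMap
  { toFun := fun a => LinearMap.toContinuousLinearMap (LinearMap.mulLeft ℂ a)
    map_add' := fun a b => by ext m; simp [add_mul]
    map_smul' := fun c a => by ext m; simp [smul_mul_assoc] }

@[simp] lemma mulCLM_apply (a b : Mat) : mulCLM a b = a * b := rfl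

/-- product rule for matrix-valued functions -/
lemma HasDerivAt.matmul {f g : ℂ → Mat} {f' g' : Mat} {t : ℂ}
    (hf : HasDerivAt f f' t) (hg : HasDerivAt g g' t) :
    HasDerivAt (fun s => f s * g s) (f' * g t + f t * g') t := by
  have h1 := mulCLM.hasDerivAt_of_bilinear (fun _ => hf) (fun _ => hg)
  rw [add_comm] at h1
  exact h1

/-- a matrix-valued function continuous at `x k` which vanishes off the range of `x`
vanishes at `x k` -/
lemma vanish_at {n : ℕ} (x : Fin n → ℂ) (k : Fin n) {g : ℂ → Mat}
    (hg : ContinuousAt g (x k)) (h0 : ∀ z : ℂ, (∀ j, z ≠ x j) → g z = 0) :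
    g (x k) = 0 := by
  have hd : Dense (Set.range x)ᶜ := (Set.finite_range x).countable.dense_compl ℂ
  have hne : (𝓝[(Set.range x)ᶜ] (x k)).NeBot :=
    mem_closure_iff_nhdsWithin_neBot.1 (hd (x k))
  have h1 : Filter.Tendsto g (𝓝[(Set.range x)ᶜ] (x k)) (𝓝 (g (x k))) :=
    hg.continuousWithinAt
  have h2 : Filter.Tendsto g (𝓝[(Set.range x)ᶜ] (x k)) (𝓝 0) := by
    apply Filter.Tendsto.congr' _ tendsto_const_nhds
    filter_upwards [self_mem_nhdsWithin] with z hz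
    exact (h0 z fun j hj => hz ⟨j, hj.symm⟩).symm
  exact tendsto_nhds_unique h1 h2

/-- directional second derivative along a curve -/
lemma hasDerivAt_fderiv_apply {E F : Type*} [NormedAddCommGroup E] [NormedSpace ℂ E]
    [NormedAddCommGroup F] [NormedSpace ℂ F] {f : E → F} {P : E}
    (hf : DifferentiableAt ℂ (fderiv ℂ f) P) {c : ℂ → E} {v : E} {t0 : ℂ}
    (hc : HasDerivAt c v t0) (hcP : c t0 = P) (u : E) :
    HasDerivAt (fun t => fderiv ℂ f (c t) u) ((fderiv ℂ (fderiv ℂ f) P v) u) t0 := by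
  have h1 : HasFDerivAt (fun Q => (fderiv ℂ f Q) u)
      ((ContinuousLinearMap.apply ℂ F u).comp (fderiv ℂ (fderiv ℂ f) P)) P :=
    ((ContinuousLinearMap.apply ℂ F u).hasFDerivAt).comp P hf.hasFDerivAt
  subst hcP
  exact h1.comp_hasDerivAt t0 hc

lemma extract_ne {n : ℕ} (x : Fin n → ℂ) (hd : ∀ a b : Fin n, a ≠ b → x a ≠ x b)
    (i j : Fin n) (hij : i ≠ j) (M K : Fin n → Mat)
    (hkey : ∀ z : ℂ, (∀ l, z ≠ x l) →
      ∑ l, (z - x l)⁻¹ • M l + ∑ l, ((z - x i)⁻¹ * (z - x l)⁻¹) • K l = 0) :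
    M j = (x i - x j)⁻¹ • K j := by
  set g : ℂ → Mat := fun w => M j + (w - x i)⁻¹ • K j
      + ∑ l ∈ Finset.univ.erase j, (((w - x j) * (w - x l)⁻¹) • M l
        + ((w - x j) * ((w - x i)⁻¹ * (w - x l)⁻¹)) • K l) with hg_def
  have h0 : ∀ z : ℂ, (∀ l, z ≠ x l) → g z = 0 := by
    intro z hz
    have hzj : z - x j ≠ 0 := sub_ne_zero.2 (hz j)
    have hform : g z = (z - x j) •
        (∑ l, (z - x l)⁻¹ • M l + ∑ l, ((z - x i)⁻¹ * (z - x l)⁻¹) • K l) := by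
      rw [hg_def]
      rw [smul_add, Finset.smul_sum, Finset.smul_sum]
      simp only [smul_smul]
      rw [← Finset.add_sum_erase _ (fun l => ((z - x j) * (z - x l)⁻¹) • M l) (Finset.mem_univ j),
          ← Finset.add_sum_erase _
            (fun l => ((z - x j) * ((z - x i)⁻¹ * (z - x l)⁻¹)) • K l) (Finset.mem_univ j),
          mul_inv_cancel₀ hzj, one_smul]
      have h2 : (z - x j) * ((z - x i)⁻¹ * (z - x j)⁻¹) = (z - x i)⁻¹ := by
        rw [mul_comm ((z - x i)⁻¹), ← mul_assoc, mul_inv_cancel₀ hzj, one_mul]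
      rw [h2, Finset.sum_add_distrib]
      abel
    rw [hform, hkey z hz, smul_zero]
  have hbase : ∀ l : Fin n, l ≠ j → ContinuousAt (fun w : ℂ => (w - x l)⁻¹) (x j) := by
    intro l hl
    exact (continuousAt_id.sub continuousAt_const).inv₀ (sub_ne_zero.2 (hd j l (Ne.symm hl)))
  have hcont : ContinuousAt g (x j) := by
    rw [hg_def]
    refine (continuousAt_const.add ((hbase i hij).smul continuousAt_const)).add ?_
    refine tendsto_finset_sum _ fun l hl => ?_
    have hl' : l ≠ j := (Finset.mem_erase.1 hl).1
    exact (((continuousAt_id.sub continuousAt_const).mul (hbase l hl')).smul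
      continuousAt_const).add
      (((continuousAt_id.sub continuousAt_const).mul
        ((hbase i hij).mul (hbase l hl'))).smul continuousAt_const)
  have hv := vanish_at x j hcont h0
  have hval : g (x j) = M j + (x j - x i)⁻¹ • K j := by
    simp [hg_def, sub_self]
  rw [hval] at hv
  have h := eq_neg_of_add_eq_zero_left hv
  rw [h, ← neg_smul, ← inv_neg, neg_sub]

lemma extract_eq {n : ℕ} (x : Fin n → ℂ) (hd : ∀ a b : Fin n, a ≠ b → x a ≠ x b)
    (i : Fin n) (M K : Fin n → Mat) (hKi : K i = 0)
    (hkey : ∀ z : ℂ, (∀ l, z ≠ x l) →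
      ∑ l, (z - x l)⁻¹ • M l + ∑ l, ((z - x i)⁻¹ * (z - x l)⁻¹) • K l = 0) :
    M i = -∑ l ∈ Finset.univ.erase i, (x i - x l)⁻¹ • K l := by
  set g : ℂ → Mat := fun w => M i
      + ∑ l ∈ Finset.univ.erase i, (((w - x i) * (w - x l)⁻¹) • M l + (w - x l)⁻¹ • K l)
      with hg_def
  have h0 : ∀ z : ℂ, (∀ l, z ≠ x l) → g z = 0 := by
    intro z hz
    have hzi : z - x i ≠ 0 := sub_ne_zero.2 (hz i)
    have hform : g z = (z - x i) •
        (∑ l, (z - x l)⁻¹ • M l + ∑ l, ((z - x i)⁻¹ * (z - x l)⁻¹) • K l) := by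
      rw [hg_def]
      rw [smul_add, Finset.smul_sum, Finset.smul_sum]
      simp only [smul_smul]
      rw [← Finset.add_sum_erase _ (fun l => ((z - x i) * (z - x l)⁻¹) • M l) (Finset.mem_univ i),
          ← Finset.add_sum_erase _
            (fun l => ((z - x i) * ((z - x i)⁻¹ * (z - x l)⁻¹)) • K l) (Finset.mem_univ i),
          mul_inv_cancel₀ hzi, one_smul, hKi, smul_zero, zero_add]
      have h3 : ∀ l ∈ Finset.univ.erase i,
          ((z - x i) * ((z - x i)⁻¹ * (z - x l)⁻¹)) • K l = (z - x l)⁻¹ • K l := by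
        intro l _
        rw [← mul_assoc, mul_inv_cancel₀ hzi, one_mul]
      rw [Finset.sum_congr rfl h3, Finset.sum_add_distrib]
      abel
    rw [hform, hkey z hz, smul_zero]
  have hbase : ∀ l : Fin n, l ≠ i → ContinuousAt (fun w : ℂ => (w - x l)⁻¹) (x i) := by
    intro l hl
    exact (continuousAt_id.sub continuousAt_const).inv₀ (sub_ne_zero.2 (hd i l (Ne.symm hl)))
  have hcont : ContinuousAt g (x i) := by
    rw [hg_def]
    refine continuousAt_const.add ?_
    refine tendsto_finset_sum _ fun l hl => ?_
    have hl' : l ≠ i := (Finset.mem_erase.1 hl).1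
    exact (((continuousAt_id.sub continuousAt_const).mul (hbase l hl')).smul
      continuousAt_const).add ((hbase l hl').smul continuousAt_const)
  have hv := vanish_at x i hcont h0
  have hval : g (x i) = M i + ∑ l ∈ Finset.univ.erase i, (x i - x l)⁻¹ • K l := by
    simp [hg_def, sub_self]
  rw [hval] at hv
  exact eq_neg_of_add_eq_zero_left hv

end SchlesingerAux

theorem isomonodromic_deformation_implies_schlesinger
    (n : ℕ) (hn : 2 ≤ n)
    (U : Set (Fin n → ℂ)) (hU : IsOpen U)
    (hdist : ∀ x ∈ U, ∀ i j : Fin n, i ≠ j → x i ≠ x j)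
    (A : Fin n → (Fin n → ℂ) → Matrix (Fin 2) (Fin 2) ℂ)
    (hA : ∀ j, DifferentiableOn ℂ (A j) U)
    (V : Set (ℂ × (Fin n → ℂ)))
    (hV : V = {P : ℂ × (Fin n → ℂ) | P.2 ∈ U ∧ ∀ j, P.1 ≠ P.2 j})
    (Ψ : ℂ × (Fin n → ℂ) → Matrix (Fin 2) (Fin 2) ℂ)
    (hΨreg : ContDiffOn ℂ 2 Ψ V)
    (hΨinv : ∀ P ∈ V, IsUnit (Ψ P))
    (hlin : ∀ P ∈ V, deriv (fun s => Ψ (s, P.2)) P.1 =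
      (∑ j : Fin n, (P.1 - P.2 j)⁻¹ • A j P.2) * Ψ P)
    (hiso : ∀ P ∈ V, ∀ j : Fin n,
      deriv (fun s => Ψ (P.1, Function.update P.2 j s)) (P.2 j) =
        -((P.1 - P.2 j)⁻¹ • A j P.2) * Ψ P) :
    ∀ x ∈ U,
      (∀ i j : Fin n, i ≠ j →
        pderiv' i (A j) x =
          (x i - x j)⁻¹ • (A i x * A j x - A j x * A i x)) ∧
      (∀ i : Fin n,
        pderiv' i (A i) x =
          -∑ j ∈ Finset.univ.erase i,
            (x i - x j)⁻¹ • (A i x * A j x - A j x * A i x)) := by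
  have hVo : IsOpen V := by
    rw [hV]
    have h1 : {P : ℂ × (Fin n → ℂ) | P.2 ∈ U ∧ ∀ j, P.1 ≠ P.2 j}
        = (Prod.snd ⁻¹' U) ∩ ⋂ j, {P : ℂ × (Fin n → ℂ) | P.1 ≠ P.2 j} := by
      ext P
      simp [Set.mem_iInter]
    rw [h1]
    exact (hU.preimage continuous_snd).inter (isOpen_iInter_of_finite fun j =>
      isOpen_ne_fun continuous_fst ((continuous_apply j).comp continuous_snd))
  have hΨd : ∀ Q ∈ V, DifferentiableAt ℂ Ψ Q := fun Q hQ =>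
    (hΨreg.contDiffAt (hVo.mem_nhds hQ)).differentiableAt two_ne_zero
  have hfd1 : ∀ Q ∈ V, HasDerivAt (fun s => Ψ (s, Q.2))
      (fderiv ℂ Ψ Q (1, 0)) Q.1 := by
    intro Q hQ
    exact (hΨd Q hQ).hasFDerivAt.comp_hasDerivAt Q.1
      ((hasDerivAt_id Q.1).prodMk (hasDerivAt_const Q.1 Q.2))
  have hB : ∀ Q ∈ V, fderiv ℂ Ψ Q (1, 0)
      = (∑ j, (Q.1 - Q.2 j)⁻¹ • A j Q.2) * Ψ Q := by
    intro Q hQ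
    rw [← (hfd1 Q hQ).deriv]
    exact hlin Q hQ
  have hfd2 : ∀ Q ∈ V, ∀ j : Fin n, HasDerivAt (fun s => Ψ (Q.1, Function.update Q.2 j s))
      (fderiv ℂ Ψ Q (0, Pi.single j 1)) (Q.2 j) := by
    intro Q hQ j
    have hΨF : HasFDerivAt Ψ (fderiv ℂ Ψ Q) (Q.1, Function.update Q.2 j (Q.2 j)) := by
      rw [Function.update_eq_self]
      exact (hΨd Q hQ).hasFDerivAt
    exact hΨF.comp_hasDerivAt (Q.2 j)
      ((hasDerivAt_const (Q.2 j) Q.1).prodMk (hasDerivAt_update Q.2 j (Q.2 j)))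
  have hC : ∀ Q ∈ V, ∀ j : Fin n, fderiv ℂ Ψ Q (0, Pi.single j 1)
      = -((Q.1 - Q.2 j)⁻¹ • A j Q.2) * Ψ Q := by
    intro Q hQ j
    rw [← (hfd2 Q hQ j).deriv]
    exact hiso Q hQ j
  intro x hx
  have key : ∀ i : Fin n, ∀ z : ℂ, (∀ l, z ≠ x l) →
      ∑ l, (z - x l)⁻¹ • pderiv' i (A l) x
        + ∑ l, ((z - x i)⁻¹ * (z - x l)⁻¹) • (A i x * A l x - A l x * A i x) = 0 := by
    intro i z hz
    have hP : ((z : ℂ), x) ∈ V := by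
      rw [hV]
      exact ⟨hx, hz⟩
    have hCD : ContDiffAt ℂ 2 Ψ (z, x) := hΨreg.contDiffAt (hVo.mem_nhds hP)
    have hsymm : IsSymmSndFDerivAt ℂ Ψ (z, x) := hCD.isSymmSndFDerivAt (by simp)
    have hf' : DifferentiableAt ℂ (fderiv ℂ Ψ) (z, x) :=
      (hCD.fderiv_right (m := 1) (by norm_num)).differentiableAt one_ne_zero
    have hMA : ∀ l : Fin n, HasDerivAt (fun t => A l (Function.update x i t))
        (pderiv' i (A l) x) (x i) := by
      intro l
      have hAx : DifferentiableAt ℂ (A l) x := (hA l).differentiableAt (hU.mem_nhds hx)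
      have hF : HasFDerivAt (A l) (fderiv ℂ (A l) x) (Function.update x i (x i)) := by
        rw [Function.update_eq_self]
        exact hAx.hasFDerivAt
      have h : HasDerivAt (fun t => A l (Function.update x i t))
          (fderiv ℂ (A l) x (Pi.single i 1)) (x i) :=
        hF.comp_hasDerivAt (x i) (hasDerivAt_update x i (x i))
      unfold pderiv'
      rw [h.deriv]
      exact h
    have hc1 : HasDerivAt (fun t : ℂ => ((z : ℂ), Function.update x i t))
        (((0 : ℂ), (Pi.single i 1 : Fin n → ℂ))) (x i) :=
      (hasDerivAt_const (x i) z).prodMk (hasDerivAt_update x i (x i))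
    have hc1P : (fun t : ℂ => ((z : ℂ), Function.update x i t)) (x i) = (z, x) := by
      simp
    have hc2 : HasDerivAt (fun s : ℂ => (s, x)) (((1 : ℂ), (0 : Fin n → ℂ))) z :=
      (hasDerivAt_id z).prodMk (hasDerivAt_const z x)
    have mixed1 : HasDerivAt
        (fun t => fderiv ℂ Ψ (z, Function.update x i t) ((1 : ℂ), (0 : Fin n → ℂ)))
        ((fderiv ℂ (fderiv ℂ Ψ) (z, x) ((0 : ℂ), (Pi.single i 1 : Fin n → ℂ)))
          ((1 : ℂ), (0 : Fin n → ℂ))) (x i) :=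
      hasDerivAt_fderiv_apply hf' hc1 hc1P _
    have mixed2 : HasDerivAt
        (fun s => fderiv ℂ Ψ (s, x) ((0 : ℂ), (Pi.single i 1 : Fin n → ℂ)))
        ((fderiv ℂ (fderiv ℂ Ψ) (z, x) ((1 : ℂ), (0 : Fin n → ℂ)))
          ((0 : ℂ), (Pi.single i 1 : Fin n → ℂ))) z :=
      hasDerivAt_fderiv_apply hf' hc2 rfl _
    have hev1 : ∀ᶠ t in 𝓝 (x i), ((z : ℂ), Function.update x i t) ∈ V :=
      hc1.continuousAt.eventually_mem (by
        show V ∈ 𝓝 ((z : ℂ), Function.update x i (x i))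
        rw [Function.update_eq_self]
        exact hVo.mem_nhds hP)
    have hX' : HasDerivAt
        (fun t => (∑ l, (z - Function.update x i t l)⁻¹ • A l (Function.update x i t))
          * Ψ (z, Function.update x i t))
        ((fderiv ℂ (fderiv ℂ Ψ) (z, x) ((0 : ℂ), (Pi.single i 1 : Fin n → ℂ)))
          ((1 : ℂ), (0 : Fin n → ℂ))) (x i) := by
      apply mixed1.congr_of_eventuallyEq
      filter_upwards [hev1] with t ht
      exact (hB _ ht).symm
    have hterm : ∀ l : Fin n, HasDerivAt
        (fun t => (z - Function.update x i t l)⁻¹ • A l (Function.update x i t))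
        ((if l = i then ((z - x i) ^ 2)⁻¹ else 0) • A l x
          + (z - x l)⁻¹ • pderiv' i (A l) x) (x i) := by
      intro l
      rcases eq_or_ne l i with rfl | hl
      · simp only [Function.update_self, eq_self_iff_true, if_true]
        have hs : HasDerivAt (fun t : ℂ => (z - t)⁻¹) (((z - x l) ^ 2)⁻¹) (x l) := by
          have h1 : HasDerivAt (fun t : ℂ => z - t) (-1) (x l) :=
            (hasDerivAt_id (x l)).const_sub z
          have h2 := h1.inv (sub_ne_zero.2 (hz l))
          exact h2.congr_deriv (by simp)
        have h3 := hs.smul (hMA l)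
        rw [Function.update_eq_self] at h3
        rw [add_comm]
        exact h3
      · simp only [Function.update_of_ne hl]
        rw [if_neg hl, zero_smul, zero_add]
        exact (hMA l).const_smul ((z - x l)⁻¹)
    have hBder : HasDerivAt
        (fun t => ∑ l, (z - Function.update x i t l)⁻¹ • A l (Function.update x i t))
        (((z - x i) ^ 2)⁻¹ • A i x + ∑ l, (z - x l)⁻¹ • pderiv' i (A l) x) (x i) := by
      have hsum := HasDerivAt.fun_sum (u := Finset.univ) (fun l _ => hterm l)
      refine hsum.congr_deriv ?_
      symm
      rw [Finset.sum_add_distrib]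
      congr 1
      simp [ite_smul]
    have hΨder1 : HasDerivAt (fun t => Ψ (z, Function.update x i t))
        (-((z - x i)⁻¹ • A i x) * Ψ (z, x)) (x i) := by
      have h := hfd2 (z, x) hP i
      rw [hC (z, x) hP i] at h
      exact h
    have hXcomp := hBder.matmul hΨder1
    simp only [Function.update_eq_self] at hXcomp
    have hXval := hX'.unique hXcomp
    have hev2 : ∀ᶠ s in 𝓝 z, ((s : ℂ), x) ∈ V :=
      hc2.continuousAt.eventually_mem (hVo.mem_nhds hP)
    have hY' : HasDerivAt (fun s => -((s - x i)⁻¹ • A i x) * Ψ (s, x))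
        ((fderiv ℂ (fderiv ℂ Ψ) (z, x) ((1 : ℂ), (0 : Fin n → ℂ)))
          ((0 : ℂ), (Pi.single i 1 : Fin n → ℂ))) z := by
      apply mixed2.congr_of_eventuallyEq
      filter_upwards [hev2] with s hs
      exact (hC _ hs i).symm
    have hscal : HasDerivAt (fun s : ℂ => -((s - x i)⁻¹ • A i x))
        (((z - x i) ^ 2)⁻¹ • A i x) z := by
      have h1 : HasDerivAt (fun s : ℂ => (s - x i)⁻¹) (-(((z - x i) ^ 2)⁻¹)) z := by
        have h2 := ((hasDerivAt_id z).sub_const (x i)).inv (sub_ne_zero.2 (hz i))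
        exact h2.congr_deriv (by simp [neg_div])
      have h4 := (h1.smul_const (A i x)).neg
      exact h4.congr_deriv (by simp)
    have hΨder2 : HasDerivAt (fun s => Ψ (s, x))
        ((∑ l, (z - x l)⁻¹ • A l x) * Ψ (z, x)) z := by
      have h := hfd1 (z, x) hP
      rw [hB (z, x) hP] at h
      exact h
    have hYcomp := hscal.matmul hΨder2
    beta_reduce at hYcomp
    have hYval := hY'.unique hYcomp
    have hmain : fderiv ℂ (fderiv ℂ Ψ) (z, x) ((0 : ℂ), (Pi.single i 1 : Fin n → ℂ))
        ((1 : ℂ), (0 : Fin n → ℂ)) = fderiv ℂ (fderiv ℂ Ψ) (z, x) ((1 : ℂ), (0 : Fin n → ℂ))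
        ((0 : ℂ), (Pi.single i 1 : Fin n → ℂ)) :=
      hsymm ((0 : ℂ), (Pi.single i 1 : Fin n → ℂ)) ((1 : ℂ), (0 : Fin n → ℂ))
    rw [hXval, hYval] at hmain
    -- cancel Ψ
    have hcancel : (((z - x i) ^ 2)⁻¹ • A i x + ∑ l, (z - x l)⁻¹ • pderiv' i (A l) x)
        + (∑ l, (z - x l)⁻¹ • A l x) * (-((z - x i)⁻¹ • A i x))
        = ((z - x i) ^ 2)⁻¹ • A i x
          + (-((z - x i)⁻¹ • A i x)) * (∑ l, (z - x l)⁻¹ • A l x) := by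
      apply (hΨinv (z, x) hP).mul_right_cancel
      calc ((((z - x i) ^ 2)⁻¹ • A i x + ∑ l, (z - x l)⁻¹ • pderiv' i (A l) x)
            + (∑ l, (z - x l)⁻¹ • A l x) * (-((z - x i)⁻¹ • A i x))) * Ψ (z, x)
          = (((z - x i) ^ 2)⁻¹ • A i x + ∑ l, (z - x l)⁻¹ • pderiv' i (A l) x) * Ψ (z, x)
            + (∑ l, (z - x l)⁻¹ • A l x) * (-((z - x i)⁻¹ • A i x) * Ψ (z, x)) := by
            rw [add_mul, mul_assoc]
        _ = ((z - x i) ^ 2)⁻¹ • A i x * Ψ (z, x)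
            + -((z - x i)⁻¹ • A i x) * ((∑ l, (z - x l)⁻¹ • A l x) * Ψ (z, x)) := hmain
        _ = (((z - x i) ^ 2)⁻¹ • A i x
            + -((z - x i)⁻¹ • A i x) * (∑ l, (z - x l)⁻¹ • A l x)) * Ψ (z, x) := by
            rw [add_mul, mul_assoc]
    rw [add_assoc] at hcancel
    have h1 := add_left_cancel hcancel
    have hS : (∑ l, (z - x l)⁻¹ • pderiv' i (A l) x)
        = (-((z - x i)⁻¹ • A i x)) * (∑ l, (z - x l)⁻¹ • A l x)
          - (∑ l, (z - x l)⁻¹ • A l x) * (-((z - x i)⁻¹ • A i x)) :=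
      eq_sub_of_add_eq h1
    rw [hS, Finset.mul_sum, Finset.sum_mul, ← Finset.sum_sub_distrib,
      ← Finset.sum_add_distrib]
    apply Finset.sum_eq_zero
    intro l _
    simp only [neg_mul, mul_neg, smul_mul_assoc, mul_smul_comm, smul_smul, smul_sub]
    module
  refine ⟨fun i j hij => ?_, fun i => ?_⟩
  · exact extract_ne x (hdist x hx) i j hij _ _ (key i)
  · exact extract_eq x (hdist x hx) i _ _ (by rw [sub_self]) (key i)
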